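/- The number of Dyck paths of semilength 2n that avoid the consecutive step patterns UUU and DUD and start with UUD (when nonempty) equals the n-th Catalan number. -/

import Mathlib

/-- Every prefix of the path has nonnegative sum (the path stays weakly above the x-axis). -/
def NonnegPrefixes (w : List ℤ) : Prop := ∀ p ∈ w.inits, 0 ≤ p.sum

/-- A Dyck word: steps U = 1 and D = -1, nonnegative prefixes, ending at height 0. -/
def IsDyckWord (w : List ℤ) : Prop :=
  (∀ s ∈ w, s = 1 ∨ s = -1) ∧ NonnegPrefixes w ∧ w.sum = 0

/-- A Motzkin path: steps U = 1, F = 0, D = -1, nonnegative prefixes, ending at height 0. -/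
def IsMotzkinWord (w : List ℤ) : Prop :=
  (∀ s ∈ w, s = 1 ∨ s = 0 ∨ s = -1) ∧ NonnegPrefixes w ∧ w.sum = 0

/-- A Dyck meander with catastrophes: steps U = 1, D = -1, D_i = -i (i ≥ 2),
nonnegative, and every catastrophe step D_i (i ≥ 2) lands exactly at height 0. -/
def IsDyckMeanderCat (w : List ℤ) : Prop :=
  (∀ s ∈ w, s = 1 ∨ s ≤ -1) ∧ NonnegPrefixes w ∧
    ∀ i, i < w.length → w.getD i 0 ≤ -2 → (w.take (i+1)).sum = 0

/-- A Motzkin meander with catastrophes: steps U = 1, F = 0, D = -1, D_i = -i (i ≥ 2),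
nonnegative, every catastrophe landing exactly at height 0. -/
def IsMotzkinMeanderCat (w : List ℤ) : Prop :=
  (∀ s ∈ w, s ≤ 1) ∧ NonnegPrefixes w ∧
    ∀ i, i < w.length → w.getD i 0 ≤ -2 → (w.take (i+1)).sum = 0

def IsDyckExcursionCat (w : List ℤ) : Prop := IsDyckMeanderCat w ∧ w.sum = 0

def IsMotzkinExcursionCat (w : List ℤ) : Prop := IsMotzkinMeanderCat w ∧ w.sum = 0

/-- The factor `pat` occurs in `w` starting at position `i`. -/
def OccursAt (pat w : List ℤ) (i : ℕ) : Prop := pat <+: w.drop i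

/-- `w` has no occurrence of the factor `pat`. -/
def Avoids (pat w : List ℤ) : Prop := ∀ i, ¬ OccursAt pat w i

/-- `w` has no occurrence of `pat` starting at height h > 0. -/
def AvoidsAtPosHeight (pat w : List ℤ) : Prop :=
  ∀ i, OccursAt pat w i → (w.take i).sum ≤ 0

/-- `w` has no occurrence of `pat` starting at height h ≥ 2. -/
def AvoidsAtHeightGe2 (pat w : List ℤ) : Prop :=
  ∀ i, OccursAt pat w i → (w.take i).sum < 2

def pUUU : List ℤ := [1, 1, 1]
def pDUD : List ℤ := [-1, 1, -1]
def pUUD : List ℤ := [1, 1, -1]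
def pUD : List ℤ := [1, -1]
def pDU : List ℤ := [-1, 1]

namespace Stmt0Aux

open List

/-- Replace U by UUD and D by D. -/
def tr (s : ℤ) : List ℤ := if s = 1 then [1, 1, -1] else [-1]

def T (v : List ℤ) : List ℤ := v.flatMap tr

@[simp] lemma T_nil : T [] = [] := rfl

lemma T_cons_one (v : List ℤ) : T (1 :: v) = 1 :: 1 :: -1 :: T v := by
  simp [T, tr]

lemma T_cons_neg {s : ℤ} (hs : s ≠ 1) (v : List ℤ) : T (s :: v) = -1 :: T v := by
  simp [T, tr, hs]

lemma T_steps (v : List ℤ) : ∀ s ∈ T v, s = 1 ∨ s = -1 := by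
  intro s hs
  simp only [T, mem_flatMap] at hs
  obtain ⟨a, -, hs⟩ := hs
  unfold tr at hs
  split at hs <;> simp at hs <;> tauto

lemma T_sum (v : List ℤ) (hv : ∀ s ∈ v, s = 1 ∨ s = -1) : (T v).sum = v.sum := by
  induction v with
  | nil => rfl
  | cons a v ih =>
    have ih' := ih (fun s hs => hv s (mem_cons_of_mem _ hs))
    rcases hv a mem_cons_self with h | h <;> subst h
    · rw [T_cons_one]; simp [ih']
    · rw [T_cons_neg (by norm_num)]; simp [ih']

lemma T_length (v : List ℤ) (hv : ∀ s ∈ v, s = 1 ∨ s = -1) :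
    ((T v).length : ℤ) = 2 * v.length + v.sum := by
  induction v with
  | nil => simp
  | cons a v ih =>
    have ih' := ih (fun s hs => hv s (mem_cons_of_mem _ hs))
    rcases hv a mem_cons_self with h | h <;> subst h
    · rw [T_cons_one]; push_cast; push_cast at ih'; simp; omega
    · rw [T_cons_neg (by norm_num)]; push_cast; push_cast at ih'; simp; omega

/-- Prefix-nonnegativity starting from height `c`. -/
def NP (c : ℤ) (w : List ℤ) : Prop := ∀ p ∈ w.inits, 0 ≤ c + p.sum

lemma NP_nil (c : ℤ) : NP c [] ↔ 0 ≤ c := by simp [NP]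

lemma NP_cons (c a : ℤ) (w : List ℤ) : NP c (a :: w) ↔ 0 ≤ c ∧ NP (c + a) w := by
  constructor
  · intro h
    refine ⟨by simpa using h [] (by simp), fun p hp => ?_⟩
    have := h (a :: p) (by rw [mem_inits] at hp ⊢; exact cons_prefix_cons.mpr ⟨rfl, hp⟩)
    simp at this ⊢; linarith
  · rintro ⟨hc, h⟩ p hp
    rw [mem_inits, prefix_cons_iff] at hp
    rcases hp with rfl | ⟨q, rfl, hq⟩
    · simpa using hc
    · have := h q (by rwa [mem_inits])
      simp at this ⊢; linarith

lemma nonnegPrefixes_iff_NP (w : List ℤ) : NonnegPrefixes w ↔ NP 0 w := by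
  simp [NonnegPrefixes, NP]

lemma NP_T (v : List ℤ) (hv : ∀ s ∈ v, s = 1 ∨ s = -1) : ∀ c, NP c (T v) ↔ NP c v := by
  induction v with
  | nil => intro c; simp
  | cons a v ih =>
    intro c
    have ih' := ih (fun s hs => hv s (mem_cons_of_mem _ hs))
    rcases hv a mem_cons_self with h | h <;> subst h
    · rw [T_cons_one, NP_cons, NP_cons, NP_cons, NP_cons]
      have e : c + 1 + 1 + -1 = c + 1 := by ring
      rw [e]
      constructor
      · rintro ⟨h0, -, -, h3⟩
        exact ⟨h0, (ih' _).mp h3⟩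
      · rintro ⟨h0, h3⟩
        exact ⟨h0, by linarith, by linarith, (ih' _).mpr h3⟩
    · rw [T_cons_neg (by norm_num), NP_cons, NP_cons]
      exact and_congr_right fun _ => ih' _

lemma NP_T' (v : List ℤ) (hv : ∀ s ∈ v, s = 1 ∨ s = -1) :
    NonnegPrefixes (T v) ↔ NonnegPrefixes v := by
  rw [nonnegPrefixes_iff_NP, nonnegPrefixes_iff_NP, NP_T v hv]

/-- The shape of suffixes of `T v`. -/
lemma T_drop_shape (v : List ℤ) : ∀ i : ℕ,
    (∃ u, (T v).drop i = T u) ∨ (∃ u, (T v).drop i = 1 :: -1 :: T u) ∨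
      (∃ u, (T v).drop i = -1 :: T u) := by
  induction v with
  | nil => intro i; left; exact ⟨[], by simp⟩
  | cons a v ih =>
    intro i
    by_cases ha : a = 1
    · subst ha
      rw [T_cons_one]
      match i with
      | 0 => left; exact ⟨1 :: v, by simp [T_cons_one]⟩
      | 1 => right; left; exact ⟨v, rfl⟩
      | 2 => right; right; exact ⟨v, rfl⟩
      | (i+3) => simpa using ih i
    · rw [T_cons_neg ha]
      match i with
      | 0 => right; right; exact ⟨v, rfl⟩
      | (i+1) => simpa using ih i

lemma not_UD_prefix_T (v : List ℤ) : ¬ ([1, -1] : List ℤ) <+: T v := by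
  rintro ⟨t, ht⟩
  cases v with
  | nil => simp at ht
  | cons a v =>
    by_cases ha : a = 1
    · subst ha; rw [T_cons_one] at ht; simp at ht
    · rw [T_cons_neg ha] at ht; simp at ht

lemma not_UUU_prefix_T (v : List ℤ) : ¬ ([1, 1, 1] : List ℤ) <+: T v := by
  rintro ⟨t, ht⟩
  cases v with
  | nil => simp at ht
  | cons a v =>
    by_cases ha : a = 1
    · subst ha; rw [T_cons_one] at ht; simp at ht
    · rw [T_cons_neg ha] at ht; simp at ht

lemma not_DUD_prefix_T (v : List ℤ) : ¬ ([-1, 1, -1] : List ℤ) <+: T v := by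
  rintro ⟨t, ht⟩
  cases v with
  | nil => simp at ht
  | cons a v =>
    by_cases ha : a = 1
    · subst ha; rw [T_cons_one] at ht; simp at ht
    · rw [T_cons_neg ha] at ht
      simp only [cons_append, cons.injEq] at ht
      exact not_UD_prefix_T v ⟨t, ht.2⟩

lemma avoids_UUU_T (v : List ℤ) : Avoids pUUU (T v) := by
  intro i hocc
  unfold OccursAt pUUU at hocc
  rcases T_drop_shape v i with ⟨u, hu⟩ | ⟨u, hu⟩ | ⟨u, hu⟩ <;> rw [hu] at hocc
  · exact not_UUU_prefix_T u hocc
  · obtain ⟨t, ht⟩ := hocc; simp at ht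
  · obtain ⟨t, ht⟩ := hocc; simp at ht

lemma avoids_DUD_T (v : List ℤ) : Avoids pDUD (T v) := by
  intro i hocc
  unfold OccursAt pDUD at hocc
  rcases T_drop_shape v i with ⟨u, hu⟩ | ⟨u, hu⟩ | ⟨u, hu⟩ <;> rw [hu] at hocc
  · exact not_DUD_prefix_T u hocc
  · obtain ⟨t, ht⟩ := hocc; simp at ht
  · obtain ⟨t, ht⟩ := hocc
    simp only [cons_append, cons.injEq] at ht
    exact not_UD_prefix_T u ⟨t, ht.2⟩

lemma avoids_drop {pat w : List ℤ} (h : Avoids pat w) (k : ℕ) : Avoids pat (w.drop k) := by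
  intro i hi
  exact h (k + i) (by rwa [OccursAt, ← drop_drop])

lemma getLast?_cons_ne {a : ℤ} {l : List ℤ} (h : l ≠ []) : (a :: l).getLast? = l.getLast? := by
  cases l with
  | nil => simp at h
  | cons b t => simp [List.getLast?_cons_cons]

lemma exists_preimage : ∀ (N : ℕ) (w : List ℤ), w.length ≤ N →
    (∀ s ∈ w, s = 1 ∨ s = -1) → Avoids pUUU w → Avoids pDUD w →
    w.getLast? ≠ some 1 →
    (∀ t, w = 1 :: t → [1, -1] <+: t) →
    ∃ v, (∀ s ∈ v, s = 1 ∨ s = -1) ∧ w = T v := by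
  intro N
  induction N with
  | zero =>
    intro w hw _ _ _ _ _
    have : w = [] := by cases w <;> simp_all
    exact ⟨[], by simp, by simp [this]⟩
  | succ N ih =>
    intro w hlen hsteps hUUU hDUD hlast hhead
    cases w with
    | nil => exact ⟨[], by simp, by simp⟩
    | cons a t =>
      rcases hsteps a mem_cons_self with ha | ha <;> subst ha
      · -- w = 1 :: t, so t = 1 :: -1 :: r
        obtain ⟨r, hr⟩ := hhead t rfl
        obtain ⟨r, rfl⟩ : ∃ r', t = 1 :: -1 :: r' := ⟨r, by rw [← hr]; rfl⟩
        -- w = 1 :: 1 :: -1 :: r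
        have hsteps' : ∀ s ∈ r, s = 1 ∨ s = -1 := fun s hs => hsteps s (by simp [hs])
        have hdrop : (1 :: 1 :: -1 :: r : List ℤ).drop 3 = r := rfl
        have hUUU' : Avoids pUUU r := hdrop ▸ avoids_drop hUUU 3
        have hDUD' : Avoids pDUD r := hdrop ▸ avoids_drop hDUD 3
        have hlast' : r.getLast? ≠ some 1 := by
          rcases eq_or_ne r [] with rfl | hr0
          · simp
          · rwa [getLast?_cons_ne (by simp), getLast?_cons_ne (by simp),
              getLast?_cons_ne hr0] at hlast
        have hhead' : ∀ q, r = 1 :: q → [1, -1] <+: q := by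
          rintro q rfl
          cases q with
          | nil => simp at hlast
          | cons x q' =>
            rcases hsteps x (by simp) with hx | hx <;> subst hx
            · cases q' with
              | nil => simp at hlast
              | cons y q'' =>
                rcases hsteps y (by simp) with hy | hy <;> subst hy
                · exact absurd ⟨q'', rfl⟩ (hUUU 3)
                · exact ⟨q'', rfl⟩
            · exact absurd ⟨q', rfl⟩ (hDUD 2)
        obtain ⟨v, hv, rfl⟩ := ih r (by simp at hlen ⊢; omega) hsteps' hUUU' hDUD' hlast' hhead'
        refine ⟨1 :: v, ?_, (T_cons_one v).symm⟩
        intro s hs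
        rcases mem_cons.mp hs with rfl | hs
        · left; rfl
        · exact hv s hs
      · -- w = -1 :: t
        have hsteps' : ∀ s ∈ t, s = 1 ∨ s = -1 := fun s hs => hsteps s (by simp [hs])
        have hdrop : (-1 :: t : List ℤ).drop 1 = t := rfl
        have hUUU' : Avoids pUUU t := hdrop ▸ avoids_drop hUUU 1
        have hDUD' : Avoids pDUD t := hdrop ▸ avoids_drop hDUD 1
        have hlast' : t.getLast? ≠ some 1 := by
          rcases eq_or_ne t [] with rfl | ht0
          · simp
          · rwa [getLast?_cons_ne ht0] at hlast
        have hhead' : ∀ q, t = 1 :: q → [1, -1] <+: q := by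
          rintro q rfl
          cases q with
          | nil => simp at hlast
          | cons x q' =>
            rcases hsteps x (by simp) with hx | hx <;> subst hx
            · cases q' with
              | nil => simp at hlast
              | cons y q'' =>
                rcases hsteps y (by simp) with hy | hy <;> subst hy
                · exact absurd ⟨q'', rfl⟩ (hUUU 1)
                · exact ⟨q'', rfl⟩
            · exact absurd ⟨q', rfl⟩ (hDUD 0)
        obtain ⟨v, hv, rfl⟩ := ih t (by simp at hlen ⊢; omega) hsteps' hUUU' hDUD' hlast' hhead'
        refine ⟨-1 :: v, ?_, (T_cons_neg (by norm_num) v).symm⟩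
        intro s hs
        rcases mem_cons.mp hs with rfl | hs
        · right; rfl
        · exact hv s hs

lemma T_inj : ∀ v v' : List ℤ, (∀ s ∈ v, s = 1 ∨ s = -1) → (∀ s ∈ v', s = 1 ∨ s = -1) →
    T v = T v' → v = v' := by
  intro v
  induction v with
  | nil =>
    intro v' _ hv' h
    cases v' with
    | nil => rfl
    | cons a v' =>
      exfalso
      rcases hv' a mem_cons_self with ha | ha <;> subst ha
      · rw [T_cons_one] at h; simp at h
      · rw [T_cons_neg (by norm_num)] at h; simp at h
  | cons a v ih =>
    intro v' hv hv' h
    cases v' with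
    | nil =>
      exfalso
      rcases hv a mem_cons_self with ha | ha <;> subst ha
      · rw [T_cons_one] at h; simp at h
      · rw [T_cons_neg (by norm_num)] at h; simp at h
    | cons b v' =>
      have hv2 : ∀ s ∈ v, s = 1 ∨ s = -1 := fun s hs => hv s (mem_cons_of_mem _ hs)
      have hv'2 : ∀ s ∈ v', s = 1 ∨ s = -1 := fun s hs => hv' s (mem_cons_of_mem _ hs)
      rcases hv a mem_cons_self with ha | ha <;> subst ha <;>
        rcases hv' b mem_cons_self with hb | hb <;> subst hb
      · rw [T_cons_one, T_cons_one] at h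
        simp only [cons.injEq] at h
        rw [ih v' hv2 hv'2 h.2.2.2]
      · rw [T_cons_one, T_cons_neg (by norm_num)] at h; simp at h
      · rw [T_cons_neg (by norm_num), T_cons_one] at h; simp at h
      · rw [T_cons_neg (by norm_num), T_cons_neg (by norm_num)] at h
        simp only [cons.injEq] at h
        rw [ih v' hv2 hv'2 h.2]

/-! ### Bridge to Mathlib's `DyckWord` -/

open DyckStep

def ofStep : DyckStep → ℤ
  | U => 1
  | D => -1

def toStep (s : ℤ) : DyckStep := if s = 1 then U else D

lemma ofStep_toStep {s : ℤ} (hs : s = 1 ∨ s = -1) : ofStep (toStep s) = s := by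
  rcases hs with rfl | rfl <;> simp [ofStep, toStep]

lemma toStep_ofStep (d : DyckStep) : toStep (ofStep d) = d := by
  cases d <;> simp [ofStep, toStep]

lemma ofStep_inj : Function.Injective ofStep := by
  intro a b h; cases a <;> cases b <;> simp [ofStep] at h ⊢

lemma sum_map_ofStep (l : List DyckStep) :
    (l.map ofStep).sum = (l.count U : ℤ) - l.count D := by
  induction l with
  | nil => simp
  | cons d l ih =>
    cases d <;> simp [count_cons, ih, ofStep] <;> push_cast <;> ring

lemma count_toStep (l : List ℤ) (hl : ∀ s ∈ l, s = 1 ∨ s = -1) :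
    ((l.map toStep).count U : ℤ) - (l.map toStep).count D = l.sum ∧
    ((l.map toStep).count U : ℤ) + (l.map toStep).count D = l.length := by
  induction l with
  | nil => simp
  | cons a l ih =>
    have ih' := ih (fun s hs => hl s (mem_cons_of_mem _ hs))
    rcases hl a mem_cons_self with rfl | rfl <;>
      simp [count_cons, toStep] <;> push_cast <;> constructor <;> linarith [ih'.1, ih'.2]

lemma steps_map_ofStep (l : List DyckStep) : ∀ s ∈ l.map ofStep, s = 1 ∨ s = -1 := by
  intro s hs
  simp only [mem_map] at hs
  obtain ⟨d, -, rfl⟩ := hs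
  cases d <;> simp [ofStep]

/-- `IsDyckWord` for `map ofStep` of a `DyckWord`. -/
lemma isDyck_ofStep (p : DyckWord) : IsDyckWord (p.toList.map ofStep) := by
  refine ⟨steps_map_ofStep _, ?_, ?_⟩
  · intro q hq
    rw [mem_inits, prefix_iff_eq_take] at hq
    rw [hq, ← map_take, sum_map_ofStep]
    have h3 := p.count_D_le_count_U q.length
    omega
  · rw [sum_map_ofStep, p.count_U_eq_count_D]; ring

lemma length_ofStep (p : DyckWord) : (p.toList.map ofStep).length = 2 * p.semilength := by
  rw [length_map, DyckWord.two_mul_semilength_eq_length]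

/-- Equivalence between integer Dyck words of length `2*m` and `DyckWord`s of semilength `m`. -/
noncomputable def dyckEquiv (m : ℕ) :
    {p : DyckWord // p.semilength = m} ≃ {v : List ℤ // IsDyckWord v ∧ v.length = 2 * m} := by
  apply Equiv.ofBijective (fun p => ⟨p.1.toList.map ofStep, isDyck_ofStep p.1,
    by rw [length_ofStep, p.2]⟩)
  constructor
  · rintro ⟨p, hp⟩ ⟨q, hq⟩ h
    simp only [Subtype.mk.injEq] at h
    have := map_injective_iff.mpr ofStep_inj h
    exact Subtype.ext (DyckWord.ext this)
  · rintro ⟨v, ⟨hsteps, hnn, hsum⟩, hlen⟩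
    have key := count_toStep v hsteps
    have hpref : ∀ i, ((v.map toStep).take i).count D ≤ ((v.map toStep).take i).count U := by
      intro i
      rw [← map_take]
      have h1 := count_toStep (v.take i) (fun s hs => hsteps s (mem_of_mem_take hs))
      have h2 : 0 ≤ (v.take i).sum := hnn _ (by rw [mem_inits]; exact take_prefix i v)
      omega
    have hcnt : (v.map toStep).count U = (v.map toStep).count D := by omega
    refine ⟨⟨⟨v.map toStep, hcnt, hpref⟩, ?_⟩, ?_⟩
    · have h5 : 2 * (⟨v.map toStep, hcnt, hpref⟩ : DyckWord).semilength = 2 * m := by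
        rw [DyckWord.two_mul_semilength_eq_length]
        show (v.map toStep).length = 2 * m
        rw [length_map, hlen]
      omega
    · apply Subtype.ext
      show (v.map toStep).map ofStep = v
      rw [map_map]
      conv_rhs => rw [← List.map_id v]
      exact map_congr_left (fun s hs => ofStep_toStep (hsteps s hs))

end Stmt0Aux

namespace Stmt0Aux

open List

/-- The main equivalence. -/
lemma T_props {v : List ℤ} (hv : IsDyckWord v) {n : ℕ} (hlen : v.length = 2 * n) :
    IsDyckWord (T v) ∧ (T v).length = 2 * (2 * n) ∧
      Avoids pUUU (T v) ∧ Avoids pDUD (T v) ∧ (T v = [] ∨ pUUD <+: T v) := by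
  obtain ⟨hsteps, hnn, hsum⟩ := hv
  refine ⟨⟨T_steps v, (NP_T' v hsteps).mpr hnn, by rw [T_sum v hsteps, hsum]⟩, ?_, ?_, ?_, ?_⟩
  · have := T_length v hsteps
    rw [hsum, hlen] at this
    push_cast at this
    omega
  · exact avoids_UUU_T _
  · exact avoids_DUD_T _
  · cases v with
    | nil => left; simp
    | cons a v =>
      right
      have ha : a = 1 := by
        rcases hsteps a mem_cons_self with h | h
        · exact h
        · exfalso
          have := hnn [a] (by rw [mem_inits]; exact ⟨v, rfl⟩)
          rw [h] at this; simp at this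
      subst ha
      rw [T_cons_one]
      exact ⟨T v, rfl⟩

/-- The main equivalence. -/
noncomputable def mainEquiv (n : ℕ) :
    {v : List ℤ // IsDyckWord v ∧ v.length = 2 * n} ≃
    {w : List ℤ // IsDyckWord w ∧ w.length = 2 * (2 * n) ∧
      Avoids pUUU w ∧ Avoids pDUD w ∧ (w = [] ∨ pUUD <+: w)} := by
  apply Equiv.ofBijective (fun x => ⟨T x.1, T_props x.2.1 x.2.2⟩)
  constructor
  · intro x y h
    have h' : T x.1 = T y.1 := congrArg Subtype.val h
    exact Subtype.ext (T_inj x.1 y.1 x.2.1.1 y.2.1.1 h')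
  · rintro ⟨w, hD, hlen, hUUU, hDUD, hstart⟩
    have hlast : w.getLast? ≠ some 1 := by
      intro hc
      have hw : w ≠ [] := by rintro rfl; simp at hc
      have h1 : w.getLast hw = 1 := by
        rw [getLast?_eq_getLast hw] at hc
        exact Option.some.inj hc
      have h2 : w.dropLast.sum = -1 := by
        have := congrArg List.sum (dropLast_append_getLast hw)
        rw [h1] at this
        simp at this
        rw [hD.2.2] at this
        linarith
      have := hD.2.1 w.dropLast (by rw [mem_inits]; exact dropLast_prefix w)
      omega
    have hhead : ∀ t, w = 1 :: t → [1, -1] <+: t := by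
      rintro t rfl
      rcases hstart with h | ⟨r, hr⟩
      · simp at h
      · unfold pUUD at hr
        obtain ⟨t', ht'⟩ : ∃ t', t = 1 :: -1 :: t' := ⟨r, by
          have : (1 : ℤ) :: 1 :: -1 :: r = 1 :: t := hr
          exact (List.cons.inj this).2.symm⟩
        rw [ht']
        exact ⟨t', rfl⟩
    obtain ⟨v, hvsteps, rfl⟩ :=
      exists_preimage w.length w le_rfl hD.1 hUUU hDUD hlast hhead
    have hsum : v.sum = 0 := by rw [← T_sum v hvsteps]; exact hD.2.2
    have hlen' : v.length = 2 * n := by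
      have := T_length v hvsteps
      rw [hsum, hlen] at this
      push_cast at this
      omega
    exact ⟨⟨v, ⟨hvsteps, (NP_T' v hvsteps).mp hD.2.1, hsum⟩, hlen'⟩, rfl⟩

end Stmt0Aux

/-- The number of Dyck paths of semilength 2n avoiding the factors UUU and DUD and
starting with UUD (when nonempty) equals the n-th Catalan number. -/
theorem stmt_0 (n : ℕ) :
    Nat.card {w : List ℤ // IsDyckWord w ∧ w.length = 2 * (2 * n) ∧
      Avoids pUUU w ∧ Avoids pDUD w ∧ (w = [] ∨ pUUD <+: w)} = catalan n := by
  rw [← Nat.card_congr ((Stmt0Aux.dyckEquiv n).trans (Stmt0Aux.mainEquiv n)),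
    Nat.card_eq_fintype_card, DyckWord.card_dyckWord_semilength_eq_catalan]
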